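/- With G = PSL_2(C), K = PSU(2), A^+ = {a_t : t >= 0} and H the stabilizer of the unit hemisphere: for every epsilon > 0 there exists T_0 such that whenever t > T_0 and k in K satisfy a_t k in H K A^+, then k lies in K_epsilon M, where K_epsilon is the epsilon-ball around the identity in K and M = {diag(e^{i theta}, e^{-i theta})}. -/

import Mathlib

open Matrix

noncomputable section

/-- The Poincaré extension of the Möbius action of `PSL₂(ℂ)` to the upper
half-space `H³ = {(z, r) : z ∈ ℂ, r > 0}`. -/
def actM (g : Matrix (Fin 2) (Fin 2) ℂ) (p : ℂ × ℝ) : ℂ × ℝ :=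
  (((g 0 0 * p.1 + g 0 1) *
        ((starRingEnd ℂ) (g 1 0) * (starRingEnd ℂ) p.1 + (starRingEnd ℂ) (g 1 1)) +
      g 0 0 * (starRingEnd ℂ) (g 1 0) * (p.2 : ℂ) ^ 2) /
      ((‖g 1 0 * p.1 + g 1 1‖ ^ 2 + ‖g 1 0‖ ^ 2 * p.2 ^ 2 : ℝ) : ℂ),
   p.2 / (‖g 1 0 * p.1 + g 1 1‖ ^ 2 + ‖g 1 0‖ ^ 2 * p.2 ^ 2))

/-- `a_t = diag(e^{t/2}, e^{-t/2})`. -/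
def amat (t : ℝ) : Matrix (Fin 2) (Fin 2) ℂ :=
  !![Complex.exp ((t : ℂ) / 2), 0; 0, Complex.exp (-(t : ℂ) / 2)]

/-- `m_θ = diag(e^{iθ}, e^{-iθ})`, an element of `M`. -/
def mmat (θ : ℝ) : Matrix (Fin 2) (Fin 2) ℂ :=
  !![Complex.exp ((θ : ℂ) * Complex.I), 0; 0, Complex.exp (-(θ : ℂ) * Complex.I)]

/-- The unit hemisphere `Ĉ₀` in `H³` above the unit circle `C₀ ⊂ ℂ`. -/
def hemi : Set (ℂ × ℝ) := {p | 0 < p.2 ∧ ‖p.1‖ ^ 2 + p.2 ^ 2 = 1}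

/-- `H = Stab_G(Ĉ₀)`, the set-wise stabilizer of the unit hemisphere. -/
def Hset : Set (Matrix (Fin 2) (Fin 2) ℂ) := {g | g.det = 1 ∧ actM g '' hemi = hemi}

/-- `K = PSU(2)`, the stabilizer of `j = (0,1)`. -/
def Kset : Set (Matrix (Fin 2) (Fin 2) ℂ) :=
  {g | g.det = 1 ∧ actM g ((0 : ℂ), (1 : ℝ)) = ((0 : ℂ), (1 : ℝ))}

/-- A distance on `2×2` complex matrices (sum of entrywise distances),
used to measure `ε`-balls in `G` and in `K`. -/
def mdist (g h : Matrix (Fin 2) (Fin 2) ℂ) : ℝ :=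
  ‖g 0 0 - h 0 0‖ + ‖g 0 1 - h 0 1‖ +
    ‖g 1 0 - h 1 0‖ + ‖g 1 1 - h 1 1‖

local notation "conj'" => starRingEnd ℂ

lemma conj_mul_self' (z : ℂ) : conj' z * z = ((‖z‖ ^ 2 : ℝ) : ℂ) := by
  rw [mul_comm, Complex.mul_conj, Complex.sq_norm]

lemma mem_Kset_aux (c d : ℂ) (hcd : ‖c‖ ^ 2 + ‖d‖ ^ 2 = 1) :
    !![conj' d, -conj' c; c, d] ∈ Kset := by
  constructor
  · simp [Matrix.det_fin_two, conj_mul_self', ← Complex.ofReal_add]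
    norm_cast
    linarith
  · simp [actM]
    refine ⟨Or.inl (by ring), by linarith⟩

lemma Kset_form_aux {k : Matrix (Fin 2) (Fin 2) ℂ} (hk : k ∈ Kset) :
    ∃ c d : ℂ, ‖c‖ ^ 2 + ‖d‖ ^ 2 = 1 ∧
      k = !![conj' d, -conj' c; c, d] := by
  obtain ⟨hdet, hfix⟩ := hk
  rw [Matrix.det_fin_two] at hdet
  simp only [actM, Prod.mk.injEq, mul_zero, zero_add, map_zero, one_pow, mul_one,
    Complex.ofReal_one] at hfix
  obtain ⟨hfix1, hfix2⟩ := hfix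
  set a := k 0 0 with ha
  set b := k 0 1 with hb
  set c := k 1 0 with hc
  set d := k 1 1 with hd
  have hD : ‖d‖ ^ 2 + ‖c‖ ^ 2 = 1 := by
    have hne : ‖d‖ ^ 2 + ‖c‖ ^ 2 ≠ 0 := by
      intro h0; rw [h0] at hfix2; simp at hfix2
    field_simp at hfix2
    linarith
  have hnum : b * conj' d + a * conj' c = 0 := by
    rw [hD] at hfix1
    simpa using hfix1
  have hcd : c * conj' c + d * conj' d = 1 := by
    rw [Complex.mul_conj, Complex.mul_conj]
    norm_cast
    rw [Complex.normSq_eq_norm_sq, Complex.normSq_eq_norm_sq]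
    linarith
  have hA : a = conj' d := by
    linear_combination (conj' d) * hdet + c * hnum - a * hcd
  have hB : b = -conj' c := by
    linear_combination (-(conj' c)) * hdet + d * hnum - b * hcd
  refine ⟨c, d, by linarith, ?_⟩
  rw [Matrix.eta_fin_two k, ← ha, ← hb, ← hc, ← hd, hA, hB]

lemma point_eq_aux (c d : ℂ) (t r : ℝ) :
    actM (amat t * !![conj' d, -conj' c; c, d]) (0, r) =
      (conj' c * conj' d * ((r : ℂ) ^ 2 - 1) /
        ((Real.exp (-t) * (‖d‖ ^ 2 + ‖c‖ ^ 2 * r ^ 2) : ℝ) : ℂ),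
       r / (Real.exp (-t) * (‖d‖ ^ 2 + ‖c‖ ^ 2 * r ^ 2))) := by
  have habs : ‖Complex.exp (-(t:ℂ) / 2)‖ = Real.exp (-t/2) := by
    rw [Complex.norm_exp]; congr 1; simp
  have hconj : conj' (Complex.exp (-(t:ℂ) / 2)) = Complex.exp (-(t:ℂ) / 2) := by
    rw [← Complex.exp_conj]; congr 1; simp [map_div₀, map_ofNat]
  have hmul : Complex.exp ((t:ℂ) / 2) * Complex.exp (-(t:ℂ) / 2) = 1 := by
    rw [← Complex.exp_add]; ring_nf; exact Complex.exp_zero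
  have hr2 : Real.exp (-t/2) ^ 2 = Real.exp (-t) := by
    rw [sq, ← Real.exp_add]; ring_nf
  rw [amat, Matrix.mul_fin_two]
  simp only [actM, Matrix.cons_val', Matrix.cons_val_zero, Matrix.empty_val',
    Matrix.cons_val_fin_one, Matrix.cons_val_one, Matrix.head_cons, Matrix.head_fin_const,
    Matrix.of_apply, mul_zero, zero_mul, zero_add, add_zero, map_zero, _root_.map_mul, map_neg, norm_mul]
  rw [habs, hconj]
  have hd2 : (Real.exp (-t/2) * ‖d‖) ^ 2 + (Real.exp (-t/2) * ‖c‖) ^ 2 * r ^ 2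
      = Real.exp (-t) * (‖d‖ ^ 2 + ‖c‖ ^ 2 * r ^ 2) := by
    rw [mul_pow, mul_pow, hr2]; ring
  rw [hd2, Prod.mk.injEq]
  refine ⟨?_, rfl⟩
  congr 1
  linear_combination (conj' c * conj' d * ((r:ℂ) ^ 2 - 1)) * hmul

lemma actM_slide_aux (g : Matrix (Fin 2) (Fin 2) ℂ) (c₀ d₀ : ℂ) (s : ℝ)
    (hcd : ‖c₀‖ ^ 2 + ‖d₀‖ ^ 2 = 1) :
    actM (g * (!![conj' d₀, -conj' c₀; c₀, d₀] * amat s)) ((0 : ℂ), Real.exp (-s)) =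
      actM g ((0 : ℂ), (1 : ℝ)) := by
  have hcd' : c₀ * conj' c₀ + d₀ * conj' d₀ = 1 := by
    rw [Complex.mul_conj, Complex.mul_conj]
    norm_cast
    rw [Complex.normSq_eq_norm_sq, Complex.normSq_eq_norm_sq]; linarith
  have hconjE : conj' (Complex.exp ((s:ℂ) / 2)) = Complex.exp ((s:ℂ) / 2) := by
    rw [← Complex.exp_conj]; congr 1; simp [map_div₀, map_ofNat]
  have hconjF : conj' (Complex.exp (-(s:ℂ) / 2)) = Complex.exp (-(s:ℂ) / 2) := by
    rw [← Complex.exp_conj]; congr 1; simp [map_div₀, map_ofNat]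
  have hEF : Complex.exp ((s:ℂ) / 2) * Complex.exp (-(s:ℂ) / 2) = 1 := by
    rw [← Complex.exp_add]; ring_nf; exact Complex.exp_zero
  have hF2 : Complex.exp (-(s:ℂ)) = Complex.exp (-(s:ℂ) / 2) ^ 2 := by
    rw [sq, ← Complex.exp_add]; ring_nf
  rw [Matrix.eta_fin_two g, amat, Matrix.mul_fin_two, Matrix.mul_fin_two]
  simp only [actM, Matrix.cons_val', Matrix.cons_val_zero, Matrix.empty_val',
    Matrix.cons_val_fin_one, Matrix.cons_val_one, Matrix.head_cons, Matrix.head_fin_const,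
    Matrix.of_apply, mul_zero, zero_mul, zero_add, add_zero, map_zero, one_pow, mul_one,
    Complex.ofReal_one]
  set A := g 0 0
  set B := g 0 1
  set C := g 1 0
  set D := g 1 1
  set E := Complex.exp ((s:ℂ) / 2)
  set F := Complex.exp (-(s:ℂ) / 2)
  have hD1 : ‖C * (-conj' c₀ * F) + D * (d₀ * F)‖ ^ 2 +
      ‖C * (conj' d₀ * E) + D * (c₀ * E)‖ ^ 2 * Real.exp (-s) ^ 2 =
      Real.exp (-s) * (‖D‖ ^ 2 + ‖C‖ ^ 2) := by
    apply Complex.ofReal_inj.mp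
    simp only [Complex.sq_norm]
    push_cast [← Complex.mul_conj]
    rw [show -(s:ℂ) = -↑s by ring] at hF2
    rw [hF2]
    simp only [map_add, _root_.map_mul, map_neg, hconjE, hconjF, Complex.conj_conj]
    linear_combination (F^2*(E*F+1)*((C*conj' d₀ + D*c₀)*(conj' C*d₀ + conj' D*conj' c₀))) * hEF +
      (F^2*(C*conj' C + D*conj' D)) * hcd'
  have hN1 : (A * (-conj' c₀ * F) + B * (d₀ * F)) *
        conj' (C * (-conj' c₀ * F) + D * (d₀ * F)) +
      (A * (conj' d₀ * E) + B * (c₀ * E)) *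
        conj' (C * (conj' d₀ * E) + D * (c₀ * E)) * Complex.exp (-(s:ℂ)) ^ 2 =
      Complex.exp (-(s:ℂ)) * (B * conj' D + A * conj' C) := by
    rw [hF2]
    simp only [map_add, _root_.map_mul, map_neg, hconjE, hconjF, Complex.conj_conj]
    linear_combination (F^2*(E*F+1)*((A*conj' d₀ + B*c₀)*(conj' C*d₀ + conj' D*conj' c₀))) * hEF +
      (F^2*(B*conj' D + A*conj' C)) * hcd'
  rw [Prod.mk.injEq]
  constructor
  · rw [hD1]
    push_cast
    rw [hN1, mul_div_mul_left _ _ (Complex.exp_ne_zero _)]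
  · rw [hD1, ← div_div, div_self (ne_of_gt (Real.exp_pos _))]

set_option maxHeartbeats 1000000 in
lemma key_ineq_aux (x y r E : ℝ) (hx : 0 ≤ x) (hy : 0 ≤ y) (hxy : x + y = 1)
    (hr : 0 < r) (hr1 : r ≤ 1) (hE : 4 ≤ E)
    (heq : E * (x * y * (1 - r ^ 2) ^ 2 + r ^ 2) = (y + x * r ^ 2) ^ 2) :
    E * x ≤ 4 := by
  have h1r : 0 ≤ 1 - r ^ 2 := by nlinarith
  have hs1 : y + x * r ^ 2 ≤ 1 := by nlinarith [mul_nonneg hx h1r]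
  have hs0 : 0 ≤ y + x * r ^ 2 := by positivity
  have hRHS : (y + x * r ^ 2) ^ 2 ≤ 1 := by nlinarith
  have hxy0 : 0 ≤ x * y * (1 - r ^ 2) ^ 2 := by positivity
  have hr2E : E * r ^ 2 ≤ 1 := by nlinarith
  have hr2 : r ^ 2 ≤ 1 / 4 := by nlinarith
  have hq : 1 / 2 ≤ (1 - r ^ 2) ^ 2 := by nlinarith
  have hr4 : 2 * r ^ 4 ≤ r ^ 2 / 2 := by nlinarith
  have hExy : 0 ≤ E * (x * y) := mul_nonneg (by linarith) (mul_nonneg hx hy)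
  have hA := mul_le_mul_of_nonneg_left hq hExy
  have h1 : x * r ^ 2 ≤ r ^ 2 := by nlinarith
  have hB : (y + x * r ^ 2) ^ 2 ≤ (y + r ^ 2) ^ 2 := by
    nlinarith [mul_nonneg (by positivity : (0:ℝ) ≤ 2 * y + r ^ 2 + x * r ^ 2) (sub_nonneg.2 h1)]
  have step1 : E * (x * y) * (1 / 2) + E * r ^ 2 ≤ E * (x * y * (1 - r ^ 2) ^ 2 + r ^ 2) := by
    nlinarith [hA]
  have hC : (y + r ^ 2) ^ 2 ≤ 2 * y ^ 2 + 2 * r ^ 4 := by nlinarith [sq_nonneg (y - r ^ 2)]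
  have hmain : E * (x * y) * (1 / 2) + E * r ^ 2 ≤ 2 * y ^ 2 + r ^ 2 / 2 := by
    linarith [step1, heq, hB, hC, hr4]
  have hy4 : E * (x * y) ≤ 4 * y ^ 2 := by
    linarith [hmain, mul_nonneg (by linarith : (0:ℝ) ≤ E - 4) (sq_nonneg r), sq_nonneg r]
  rcases eq_or_lt_of_le hy with h0 | h0
  · exfalso
    have hy0 : y = 0 := h0.symm
    have : E * r ^ 2 ≤ r ^ 2 / 2 := by rw [hy0] at hmain; nlinarith [hmain]
    nlinarith [mul_pos hr hr, this]
  · nlinarith [hy4, h0, hxy]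

set_option maxHeartbeats 2000000 in
/-- For every `ε > 0` there is `T₀` such that whenever `t > T₀`, `k ∈ K` and
`a_t k ∈ H K A⁺`, then `k ∈ K_ε M`. -/
theorem K_component_small (ε : ℝ) (hε : 0 < ε) :
    ∃ T₀ : ℝ, ∀ t > T₀, ∀ k ∈ Kset,
      (∃ h₀ ∈ Hset, ∃ k₀ ∈ Kset, ∃ s ≥ (0 : ℝ), amat t * k = h₀ * k₀ * amat s) →
      ∃ k' ∈ Kset, ∃ θ : ℝ, mdist k' 1 < ε ∧ k = k' * mmat θ := by
  refine ⟨max 1 (Real.log (8 / ε)), ?_⟩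
  intro t ht k hk ⟨h₀, hh₀, k₀, hk₀, s, hs, heqm⟩
  obtain ⟨c, d, hcd, hkform⟩ := Kset_form_aux hk
  obtain ⟨c₀, d₀, hcd₀, hk₀form⟩ := Kset_form_aux hk₀
  have hpt : actM (amat t * k) ((0:ℂ), Real.exp (-s)) = actM h₀ ((0:ℂ), (1:ℝ)) := by
    rw [heqm, mul_assoc, hk₀form]
    exact actM_slide_aux h₀ c₀ d₀ s hcd₀
  have hj : (((0:ℂ), (1:ℝ)) : ℂ × ℝ) ∈ hemi := by
    constructor
    · norm_num
    · simp
  have hmem : actM (amat t * k) ((0:ℂ), Real.exp (-s)) ∈ hemi := by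
    rw [hpt, ← hh₀.2]
    exact Set.mem_image_of_mem _ hj
  rw [hkform, point_eq_aux] at hmem
  obtain ⟨hpos, hsum⟩ := hmem
  set r := Real.exp (-s) with hrdef
  set x := ‖c‖ ^ 2 with hxdef
  set y := ‖d‖ ^ 2 with hydef
  have hr : 0 < r := Real.exp_pos _
  have hr1 : r ≤ 1 := by
    rw [hrdef]
    calc Real.exp (-s) ≤ Real.exp 0 := Real.exp_le_exp.mpr (by linarith)
    _ = 1 := Real.exp_zero
  have hx : 0 ≤ x := by positivity
  have hy : 0 ≤ y := by positivity
  simp only at hpos hsum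
  have hD : 0 < Real.exp (-t) * (y + x * r ^ 2) := by
    rcases div_pos_iff.mp hpos with ⟨_, h⟩ | ⟨h1, _⟩
    · linarith [h]
    · linarith [hr]
  have hDabs : ‖conj' c * conj' d * ((r : ℂ) ^ 2 - 1) /
      ((Real.exp (-t) * (y + x * r ^ 2) : ℝ) : ℂ)‖ =
      ‖c‖ * ‖d‖ * (1 - r ^ 2) / (Real.exp (-t) * (y + x * r ^ 2)) := by
    rw [norm_div, Complex.norm_real, Real.norm_eq_abs, abs_of_pos hD, norm_mul, norm_mul]
    congr 2
    · rw [Complex.norm_conj, Complex.norm_conj]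
    · rw [show ((r : ℂ) ^ 2 - 1) = (((r ^ 2 - 1 : ℝ)) : ℂ) by push_cast; ring,
        Complex.norm_real, Real.norm_eq_abs, abs_of_nonpos (by nlinarith)]
      ring
  rw [hDabs] at hsum
  have hexp : Real.exp t * Real.exp (-t) = 1 := by
    rw [← Real.exp_add]; ring_nf; exact Real.exp_zero
  have hD' : Real.exp (-t) * (y + x * r ^ 2) ≠ 0 := ne_of_gt hD
  have hsum2 : x * y * (1 - r ^ 2) ^ 2 + r ^ 2 =
      (Real.exp (-t)) ^ 2 * (y + x * r ^ 2) ^ 2 := by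
    field_simp at hsum
    rw [div_eq_iff (pow_ne_zero 2 (by nlinarith [pos_of_mul_pos_right hD (Real.exp_pos _).le]))] at hsum
    rw [hxdef, hydef] at hsum ⊢
    linear_combination hsum
  have heqr : (Real.exp t) ^ 2 * (x * y * (1 - r ^ 2) ^ 2 + r ^ 2) = (y + x * r ^ 2) ^ 2 := by
    linear_combination (Real.exp t ^ 2) * hsum2 +
      ((Real.exp t * Real.exp (-t) + 1) * (y + x * r ^ 2) ^ 2) * hexp
  have hE4 : (4:ℝ) ≤ (Real.exp t) ^ 2 := by
    have h1t : (1:ℝ) ≤ t := le_of_lt (lt_of_le_of_lt (le_max_left _ _) ht)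
    have h2 : (2:ℝ) ≤ Real.exp t := by
      calc (2:ℝ) = 1 + 1 := by norm_num
      _ ≤ Real.exp 1 := Real.add_one_le_exp 1
      _ ≤ Real.exp t := Real.exp_le_exp.mpr h1t
    nlinarith
  have hkey : (Real.exp t) ^ 2 * x ≤ 4 :=
    key_ineq_aux x y r _ hx hy hcd hr hr1 hE4 heqr
  have habsc : ‖c‖ ≤ 2 * Real.exp (-t) := by
    have hsq : ‖c‖ ^ 2 ≤ (2 * Real.exp (-t)) ^ 2 := by
      nlinarith [hkey, hexp, Real.exp_pos t, Real.exp_pos (-t)]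
    have h' := Real.sqrt_le_sqrt hsq
    rwa [Real.sqrt_sq (norm_nonneg c), Real.sqrt_sq (by positivity)] at h'
  -- exp(-t) < ε / 8
  have hexp_small : Real.exp (-t) < ε / 8 := by
    have hlog : Real.log (8 / ε) < t := lt_of_le_of_lt (le_max_right _ _) ht
    have h8 : (0:ℝ) < 8 / ε := by positivity
    have h2 : 8 / ε < Real.exp t := by
      calc 8 / ε = Real.exp (Real.log (8 / ε)) := (Real.exp_log h8).symm
      _ < Real.exp t := Real.exp_lt_exp.mpr hlog
    rw [Real.exp_neg]
    rw [show ε / 8 = (8 / ε)⁻¹ by field_simp]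
    exact inv_strictAnti₀ h8 h2
  -- the absolute value of c is at most 1
  have habsc1 : ‖c‖ ≤ 1 := by
    nlinarith [norm_nonneg c, norm_nonneg d]
  -- |d| ≤ 1 and 1 - |d| ≤ x
  have habsd1 : ‖d‖ ≤ 1 := by
    nlinarith [norm_nonneg c, norm_nonneg d]
  have h1d : 1 - ‖d‖ ≤ x := by
    nlinarith [norm_nonneg d]
  -- construct k'
  set θ : ℝ := -Complex.arg d with hθdef
  set c' : ℂ := c * Complex.exp ((Complex.arg d : ℂ) * Complex.I) with hc'def
  set d' : ℂ := ((‖d‖ : ℝ) : ℂ) with hd'def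
  have habsc' : ‖c'‖ = ‖c‖ := by
    rw [hc'def, norm_mul, Complex.norm_exp]
    simp
  have habsd' : ‖d'‖ = ‖d‖ := by
    rw [hd'def, Complex.norm_real, Real.norm_eq_abs, abs_of_nonneg (norm_nonneg d)]
  have hcd' : ‖c'‖ ^ 2 + ‖d'‖ ^ 2 = 1 := by
    rw [habsc', habsd']; exact hcd
  refine ⟨!![conj' d', -conj' c'; c', d'], mem_Kset_aux c' d' hcd', θ, ?_, ?_⟩
  · -- mdist bound
    have hconjd' : conj' d' = d' := by rw [hd'def, Complex.conj_ofReal]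
    have e1 : ‖conj' d' - 1‖ = 1 - ‖d‖ := by
      rw [hconjd', hd'def, show (((‖d‖ : ℝ) : ℂ) - 1) = (((‖d‖ - 1 : ℝ)) : ℂ) by push_cast; ring,
        Complex.norm_real, Real.norm_eq_abs, abs_of_nonpos (by linarith)]
      ring
    have e2 : ‖d' - 1‖ = 1 - ‖d‖ := by
      rw [hd'def, show (((‖d‖ : ℝ) : ℂ) - 1) = (((‖d‖ - 1 : ℝ)) : ℂ) by push_cast; ring,
        Complex.norm_real, Real.norm_eq_abs, abs_of_nonpos (by linarith)]
      ring
    have hmd : mdist !![conj' d', -conj' c'; c', d'] 1 =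
        (1 - ‖d‖) + ‖c‖ + ‖c‖ + (1 - ‖d‖) := by
      simp only [mdist, Matrix.cons_val', Matrix.cons_val_zero, Matrix.empty_val',
        Matrix.cons_val_fin_one, Matrix.cons_val_one, Matrix.head_cons, Matrix.head_fin_const,
        Matrix.of_apply, Matrix.one_apply_eq, Matrix.one_apply_ne (by norm_num : (0:Fin 2) ≠ 1),
        Matrix.one_apply_ne (by norm_num : (1:Fin 2) ≠ 0), sub_zero]
      rw [e1, e2, norm_neg, Complex.norm_conj, habsc']
    rw [hmd]
    have : 2 * (1 - ‖d‖) + 2 * ‖c‖ ≤ 4 * ‖c‖ := by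
      nlinarith [norm_nonneg c]
    calc (1 - ‖d‖) + ‖c‖ + ‖c‖ + (1 - ‖d‖)
        ≤ 4 * ‖c‖ := by linarith
      _ ≤ 4 * (2 * Real.exp (-t)) := by linarith
      _ = 8 * Real.exp (-t) := by ring
      _ < 8 * (ε / 8) := by linarith
      _ = ε := by ring
  · -- k = k' * mmat θ
    have hid : ((‖d‖ : ℝ) : ℂ) * Complex.exp ((Complex.arg d : ℂ) * Complex.I) = d :=
      Complex.norm_mul_exp_arg_mul_I d
    have hEe : Complex.exp ((Complex.arg d : ℂ) * Complex.I) *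
        Complex.exp (-((Complex.arg d : ℂ) * Complex.I)) = 1 := by
      rw [← Complex.exp_add]; ring_nf; exact Complex.exp_zero
    have hconj_exp : conj' (Complex.exp ((Complex.arg d : ℂ) * Complex.I)) =
        Complex.exp (-((Complex.arg d : ℂ) * Complex.I)) := by
      rw [← Complex.exp_conj]
      congr 1
      simp [Complex.conj_I]
    have hθc : ((θ : ℝ) : ℂ) * Complex.I = -((Complex.arg d : ℂ) * Complex.I) := by
      rw [hθdef]; push_cast; ring
    have hθc2 : -((θ : ℝ) : ℂ) * Complex.I = (Complex.arg d : ℂ) * Complex.I := by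
      rw [hθdef]; push_cast; ring
    have hid2 : ((‖d‖ : ℝ) : ℂ) * Complex.exp (-((Complex.arg d : ℂ) * Complex.I)) =
        conj' d := by
      calc ((‖d‖ : ℝ) : ℂ) * Complex.exp (-((Complex.arg d : ℂ) * Complex.I))
          = conj' (((‖d‖ : ℝ) : ℂ) * Complex.exp ((Complex.arg d : ℂ) * Complex.I)) := by
            rw [_root_.map_mul, Complex.conj_ofReal, hconj_exp]
        _ = conj' d := by rw [hid]
    rw [hkform, mmat]
    ext i j
    fin_cases i <;> fin_cases j <;>
      simp only [Matrix.mul_apply, Fin.sum_univ_two, Matrix.cons_val', Matrix.cons_val_zero,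
        Matrix.empty_val', Matrix.cons_val_fin_one, Matrix.cons_val_one, Matrix.head_cons,
        Matrix.head_fin_const, Matrix.of_apply, mul_zero, zero_mul, zero_add, add_zero,
        Fin.isValue, Fin.mk_one, Fin.mk_zero]
    · rw [hθc, hd'def, Complex.conj_ofReal]
      exact hid2.symm
    · rw [hθc2, hc'def, _root_.map_mul, hconj_exp]
      linear_combination (conj' c) * hEe
    · rw [hθc, hc'def]
      linear_combination (-c) * hEe
    · rw [hθc2, hd'def]
      exact hid.symm
  
end
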